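/- Let A be a nonempty finite alphabet, S a primitive substitution on A with |S(a)| ≥ 2 for some letter a, and ω₀ : ℤ → A a configuration such that every word of length 2 occurring in ω₀ is legal for S. Then the iterated hulls converge to the substitution subshift: d_H(Ωₙ(ω₀), Ω(S)) → 0 as n → ∞. -/

import Mathlib

namespace QC

variable {A : Type*}

/-- The shift action of `ℤ` on configurations: `(m · ω)(n) = ω (n - m)`. -/
def shift (m : ℤ) (ω : ℤ → A) : ℤ → A := fun n => ω (n - m)

/-- The word `u` occurs in the configuration `ω` (at some position `k`). -/
def Occurs (u : List A) (ω : ℤ → A) : Prop :=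
  ∃ k : ℤ, u = (List.range u.length).map fun i => ω (k + i)

/-- The dictionary of a configuration: all (nonempty) words occurring in it. -/
def Dict (ω : ℤ → A) : Set (List A) := {u | u ≠ [] ∧ Occurs u ω}

/-- The set of length-`ℓ` words occurring in a configuration. -/
def DictLen (ω : ℤ → A) (ℓ : ℕ) : Set (List A) := {u | u.length = ℓ ∧ Occurs u ω}

/-- The extension of a substitution rule `S : A → List A` to words, by concatenation. -/
def wordSub (S : A → List A) (u : List A) : List A := (u.map S).flatten

/-- A word is legal for `S` if it is an infix of `Sⁿ(a)` for some letter `a` and `n : ℕ`. -/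
def Legal (S : A → List A) (u : List A) : Prop :=
  ∃ (a : A) (n : ℕ), u <:+: (wordSub S)^[n] [a]

/-- `S` is primitive: some power `p ≥ 1` of `S` maps every letter to a word containing
all letters. -/
def Primitive (S : A → List A) : Prop :=
  ∃ p : ℕ, 1 ≤ p ∧ ∀ a b : A, b ∈ (wordSub S)^[p] [a]

/-- The starting position (in `S ω`) of the block coming from the letter `ω k`. -/
def blockStart (S : A → List A) (ω : ℤ → A) (k : ℤ) : ℤ :=
  if 0 ≤ k then ((List.range k.toNat).map fun i => ((S (ω i)).length : ℤ)).sum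
  else -((List.range (-k).toNat).map fun i => ((S (ω (-(i : ℤ) - 1))).length : ℤ)).sum

open Classical in
/-- The extension of a substitution to two-sided configurations: the block structure of
`S ω` is `⋯ S(ω(-1)) . S(ω 0) S(ω 1) ⋯`, with the block of `ω 0` starting at position `0`. -/
noncomputable def confSub [Nonempty A] (S : A → List A) (ω : ℤ → A) : ℤ → A := fun n =>
  if h : ∃ k : ℤ, blockStart S ω k ≤ n ∧ n < blockStart S ω (k + 1) then
    (S (ω (Classical.choose h))).getD (n - blockStart S ω (Classical.choose h)).toNat
      (Classical.arbitrary A)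
  else Classical.arbitrary A

/-- The metric on configurations:
`d(ω₁, ω₂) = inf { 1/(r+1) : ω₁ and ω₂ agree on all |k| < r }`. -/
noncomputable def confDist (ω₁ ω₂ : ℤ → A) : ℝ :=
  sInf {x : ℝ | ∃ r : ℕ, x = 1 / (r + 1) ∧ ∀ k : ℤ, |k| < (r : ℤ) → ω₁ k = ω₂ k}

/-- Distance from a configuration to a set of configurations. -/
noncomputable def distToSet (ω : ℤ → A) (Ω : Set (ℤ → A)) : ℝ :=
  sInf (confDist ω '' Ω)

/-- The Hausdorff distance between two sets of configurations, induced by `confDist`. -/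
noncomputable def hausDist (Ω₁ Ω₂ : Set (ℤ → A)) : ℝ :=
  max (sSup ((fun ω => distToSet ω Ω₂) '' Ω₁)) (sSup ((fun ω => distToSet ω Ω₁) '' Ω₂))

/-- The product topology on `ℤ → A`, where `A` carries the discrete topology. -/
def confTop (A : Type*) : TopologicalSpace (ℤ → A) :=
  @Pi.topologicalSpace ℤ (fun _ => A) fun _ => ⊥

/-- The shift orbit of a configuration. -/
def orbit (ω : ℤ → A) : Set (ℤ → A) := {η | ∃ m : ℤ, η = shift m ω}

/-- The hull of a configuration: the closure of its shift orbit in the product topology. -/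
def hull (ω : ℤ → A) : Set (ℤ → A) := @closure _ (confTop A) (orbit ω)

/-- The `n`-th iterated hull `Ωₙ(ω₀)`: the hull of `Sⁿ(ω₀)`. -/
noncomputable def IHS [Nonempty A] (S : A → List A) (ω₀ : ℤ → A) (n : ℕ) : Set (ℤ → A) :=
  hull ((confSub S)^[n] ω₀)

/-- The substitution subshift `Ω(S) = {ω : W(ω) ⊆ W(S)}`. -/
def OmegaS (S : A → List A) : Set (ℤ → A) := {ω | ∀ u ∈ Dict ω, Legal S u}

/-- Edges of the directed graph `G(S)`: `u → w` iff `u, w` are both illegal and `w` is an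
infix of `S(u)`. -/
def GEdge (S : A → List A) (u w : List A) : Prop :=
  ¬Legal S u ∧ ¬Legal S w ∧ w <:+: wordSub S u

/-- `p` is a directed path of length `ℓ` in `G(S)` (on the vertex set of `2`-words). -/
def GPath (S : A → List A) (p : ℕ → List A) (ℓ : ℕ) : Prop :=
  (∀ i ≤ ℓ, (p i).length = 2) ∧ ∀ j < ℓ, GEdge S (p j) (p (j + 1))

/-- An initial configuration is good for `S` if every directed path in `G(S)` starting at a
`2`-word occurring in `ω₀` has length `< |A|²`. -/
def GoodInit [Fintype A] (S : A → List A) (ω₀ : ℤ → A) : Prop :=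
  ∀ (p : ℕ → List A) (ℓ : ℕ), GPath S p ℓ → Occurs (p 0) ω₀ → ℓ < (Fintype.card A) ^ 2

/-- The substitution matrix of `S`: `M(S)_{a,b}` is the number of occurrences of `a`
in `S(b)`. -/
def subMatrix [Fintype A] [DecidableEq A] (S : A → List A) : Matrix A A ℝ :=
  fun a b => ((S b).count a : ℝ)

/-- The Perron–Frobenius eigenvalue of `S`: the spectral radius of its substitution
matrix (viewed as a complex matrix). -/
noncomputable def pfEigenvalue [Fintype A] [DecidableEq A] (S : A → List A) : ℝ :=
  (spectralRadius ℂ ((subMatrix S).map (algebraMap ℝ ℂ))).toReal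

/-- The periodic configuration `u^∞`, satisfying `u^∞(n) = u(n mod |u|)`. -/
noncomputable def perConf [Nonempty A] (u : List A) : ℤ → A := fun n =>
  u.getD (n % (u.length : ℤ)).toNat (Classical.arbitrary A)

/-- `ℓ²(ℤ, ℂ)`. -/
abbrev l2Z : Type := lp (fun _ : ℤ => ℂ) 2

/-- `H` is the Schrödinger operator on `ℓ²(ℤ,ℂ)` with potential `v ∘ ω`:
`(H ψ)(n) = -(ψ(n+1) + ψ(n-1) - 2ψ(n)) + v(ω(n)) ψ(n)`. -/
def IsSchrodinger (v : A → ℝ) (ω : ℤ → A) (H : l2Z →L[ℂ] l2Z) : Prop :=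
  ∀ (ψ : l2Z) (n : ℤ),
    (H ψ : ℤ → ℂ) n = -((ψ : ℤ → ℂ) (n + 1) + (ψ : ℤ → ℂ) (n - 1) - 2 * (ψ : ℤ → ℂ) n)
      + (v (ω n) : ℂ) * (ψ : ℤ → ℂ) n

/-- The spectrum of `H`, viewed as a subset of `ℝ`. -/
def realSpectrum (H : l2Z →L[ℂ] l2Z) : Set ℝ := {x : ℝ | (x : ℂ) ∈ spectrum ℂ H}


section Aux
variable {A : Type*}

/-- The window of a configuration. -/
def window (ω : ℤ → A) (a : ℤ) (L : ℕ) : List A := (List.range L).map fun i => ω (a + i)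

lemma window_eq (ω : ℤ → A) (a : ℤ) (L : ℕ) :
    window ω a L = (List.range L).map fun i : ℕ => ω (a + (i:ℤ)) := by
  simp only [window, bind_pure_comp, List.map_eq_map, List.map_map]
  rfl

@[simp] lemma window_length (ω : ℤ → A) (a : ℤ) (L : ℕ) : (window ω a L).length = L := by
  rw [window_eq, List.length_map, List.length_range]

lemma window_getElem (ω : ℤ → A) (a : ℤ) (L : ℕ) (i : ℕ) (hi : i < L) :
    (window ω a L)[i]'(by simpa using hi) = ω (a + i) := by
  simp only [window_eq, List.getElem_map, List.getElem_range]

lemma occurs_iff (u : List A) (ω : ℤ → A) : Occurs u ω ↔ ∃ a : ℤ, u = window ω a u.length :=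
  Iff.rfl

lemma window_add (ω : ℤ → A) (a : ℤ) (L₁ L₂ : ℕ) :
    window ω a (L₁ + L₂) = window ω a L₁ ++ window ω (a + L₁) L₂ := by
  rw [window_eq, window_eq, window_eq, List.range_add, List.map_append, List.map_map]
  congr 1
  apply List.map_congr_left
  intro i hi
  simp only [Function.comp_apply]
  congr 1
  push_cast
  ring

lemma occurs_window (ω : ℤ → A) (a : ℤ) (L : ℕ) : Occurs (window ω a L) ω :=
  (occurs_iff _ _).2 ⟨a, by rw [window_length]⟩

lemma window_infix (ω : ℤ → A) (a b : ℤ) (L M : ℕ) (hab : a ≤ b) (h2 : b + L ≤ a + M) :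
    window ω b L <:+: window ω a M := by
  have h1 : M = (b - a).toNat + (L + (M - (b-a).toNat - L)) := by omega
  rw [h1, window_add, window_add]
  have h3 : a + ((b-a).toNat : ℤ) = b := by omega
  rw [h3]
  exact ⟨window ω a (b-a).toNat, window ω (b + L) (M - (b-a).toNat - L), by simp⟩

lemma occurs_of_infix {u v : List A} {ω : ℤ → A} (h : u <:+: v) (hv : Occurs v ω) :
    Occurs u ω := by
  obtain ⟨a, ha⟩ := (occurs_iff v ω).1 hv
  obtain ⟨s, t, hst⟩ := h
  refine (occurs_iff u ω).2 ⟨a + s.length, ?_⟩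
  have hlen : v.length = s.length + (u.length + t.length) := by
    rw [← hst]; simp only [List.length_append]; ring
  rw [hlen, window_add, window_add] at ha
  rw [← hst, List.append_assoc] at ha
  have h1 := List.append_inj ha (by rw [window_length])
  have h2 := List.append_inj h1.2 (by rw [window_length])
  exact h2.1

lemma window_shift (ω : ℤ → A) (m a : ℤ) (L : ℕ) :
    window (shift m ω) a L = window ω (a - m) L := by
  rw [window_eq, window_eq]
  apply List.map_congr_left
  intro i hi
  show ω (a + i - m) = ω (a - m + i)
  congr 1
  ring

lemma occurs_shift {u : List A} {ω : ℤ → A} {m : ℤ} (h : Occurs u (shift m ω)) : Occurs u ω := by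
  obtain ⟨a, ha⟩ := (occurs_iff u _).1 h
  rw [window_shift] at ha
  exact (occurs_iff u ω).2 ⟨a - m, ha⟩

/-! wordSub lemmas -/

lemma wordSub_append (S : A → List A) (u v : List A) :
    wordSub S (u ++ v) = wordSub S u ++ wordSub S v := by
  unfold wordSub
  rw [List.map_append, List.flatten_append]

@[simp] lemma wordSub_nil (S : A → List A) : wordSub S ([] : List A) = [] := rfl

@[simp] lemma wordSub_singleton (S : A → List A) (a : A) : wordSub S [a] = S a := by
  simp [wordSub]

lemma wordSub_cons (S : A → List A) (a : A) (u : List A) :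
    wordSub S (a :: u) = S a ++ wordSub S u := by
  simp [wordSub]

lemma iter_append (S : A → List A) (n : ℕ) (u v : List A) :
    (wordSub S)^[n] (u ++ v) = (wordSub S)^[n] u ++ (wordSub S)^[n] v := by
  induction n generalizing u v with
  | zero => simp
  | succ n ih =>
      rw [Function.iterate_succ_apply, Function.iterate_succ_apply,
        Function.iterate_succ_apply, wordSub_append, ih]

@[simp] lemma iter_nil (S : A → List A) (n : ℕ) : (wordSub S)^[n] ([] : List A) = [] := by
  induction n with
  | zero => rfl
  | succ n ih => rw [Function.iterate_succ_apply, wordSub_nil, ih]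

lemma iter_cons (S : A → List A) (n : ℕ) (a : A) (u : List A) :
    (wordSub S)^[n] (a :: u) = (wordSub S)^[n] [a] ++ (wordSub S)^[n] u := by
  have h : a :: u = [a] ++ u := rfl
  rw [h, iter_append]

lemma iter_infix (S : A → List A) (n : ℕ) {u v : List A} (h : u <:+: v) :
    (wordSub S)^[n] u <:+: (wordSub S)^[n] v := by
  obtain ⟨s, t, hst⟩ := h
  exact ⟨(wordSub S)^[n] s, (wordSub S)^[n] t, by rw [← hst, iter_append, iter_append]⟩

lemma wordSub_ne_nil (S : A → List A) (hS : ∀ a, S a ≠ []) {u : List A} (hu : u ≠ []) :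
    wordSub S u ≠ [] := by
  cases u with
  | nil => exact absurd rfl hu
  | cons a u => rw [wordSub_cons]; simp [hS a]

lemma iter_ne_nil (S : A → List A) (hS : ∀ a, S a ≠ []) (n : ℕ) {u : List A} (hu : u ≠ []) :
    (wordSub S)^[n] u ≠ [] := by
  induction n with
  | zero => simpa
  | succ n ih => rw [Function.iterate_succ_apply']; exact wordSub_ne_nil S hS ih

lemma legal_infix {S : A → List A} {u v : List A} (h : u <:+: v) (hv : Legal S v) :
    Legal S u := by
  obtain ⟨a, n, hn⟩ := hv
  exact ⟨a, n, h.trans hn⟩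

lemma legal_iter {S : A → List A} {u : List A} (n : ℕ) (h : Legal S u) :
    Legal S ((wordSub S)^[n] u) := by
  obtain ⟨a, m, hm⟩ := h
  refine ⟨a, n + m, ?_⟩
  rw [Function.iterate_add_apply]
  exact iter_infix S n hm

lemma legal_letter (S : A → List A) (a : A) : Legal S [a] := ⟨a, 0, by simp⟩

lemma mem_iter_singleton (S : A → List A) (hS : ∀ a, S a ≠ [])
    {p : ℕ} (hp : ∀ a b : A, b ∈ (wordSub S)^[p] [a]) {j : ℕ} (hj : p ≤ j) (a b : A) :
    b ∈ (wordSub S)^[j] [a] := by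
  obtain ⟨i, rfl⟩ := Nat.exists_eq_add_of_le hj
  rw [Function.iterate_add_apply]
  have hne : (wordSub S)^[i] [a] ≠ [] := iter_ne_nil S hS i (by simp)
  obtain ⟨c, hc⟩ := List.exists_mem_of_ne_nil _ hne
  obtain ⟨s, t, hst⟩ := List.append_of_mem hc
  rw [hst]
  have h2 : s ++ c :: t = s ++ [c] ++ t := by simp
  rw [h2, iter_append, iter_append]
  simp only [List.mem_append]
  exact Or.inl (Or.inr (hp c b))

lemma legal_infix_iter {S : A → List A} (hS : ∀ a, S a ≠ [])
    {p : ℕ} (hp : ∀ a b : A, b ∈ (wordSub S)^[p] [a]) {w : List A} (h : Legal S w) :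
    ∃ m : ℕ, ∀ n, m ≤ n → ∀ a : A, w <:+: (wordSub S)^[n] [a] := by
  obtain ⟨b, m₀, hm₀⟩ := h
  refine ⟨m₀ + p, fun n hn a => ?_⟩
  have h1 : b ∈ (wordSub S)^[n - m₀] [a] :=
    mem_iter_singleton S hS hp (by omega) a b
  obtain ⟨s, t, hst⟩ := List.append_of_mem h1
  have h2 : (wordSub S)^[m₀] [b] <:+: (wordSub S)^[m₀] ((wordSub S)^[n - m₀] [a]) := by
    apply iter_infix
    exact ⟨s, t, by rw [hst]; simp⟩
  rw [← Function.iterate_add_apply] at h2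
  have h3 : m₀ + (n - m₀) = n := by omega
  rw [h3] at h2
  exact hm₀.trans h2

end Aux
section Aux2
variable {A : Type*} [Nonempty A] {T : A → List A} {ω : ℤ → A}

@[simp] lemma window_zero (ω : ℤ → A) (a : ℤ) : window ω a 0 = [] := by
  rw [window_eq]; simp

lemma window_one (ω : ℤ → A) (a : ℤ) : window ω a 1 = [ω a] := by
  rw [window_eq, List.range_succ, List.range_zero, List.nil_append, List.map_cons, List.map_nil]
  norm_num

lemma blockStart_zero (T : A → List A) (ω : ℤ → A) : blockStart T ω 0 = 0 := by
  simp [blockStart]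

lemma blockStart_natCast (T : A → List A) (ω : ℤ → A) (m : ℕ) :
    blockStart T ω (m : ℤ) = ((List.range m).map fun i : ℕ => ((T (ω (i:ℤ))).length : ℤ)).sum := by
  rw [blockStart, if_pos (by positivity)]
  congr 1
  simp only [bind_pure_comp, List.map_eq_map, List.map_map, Int.toNat_natCast]
  rfl

lemma blockStart_neg (T : A → List A) (ω : ℤ → A) (m : ℕ) :
    blockStart T ω (-(m : ℤ)) =
      -((List.range m).map fun i : ℕ => ((T (ω (-(i:ℤ) - 1))).length : ℤ)).sum := by
  rcases Nat.eq_zero_or_pos m with hm | hm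
  · subst hm; simpa using blockStart_zero T ω
  rw [blockStart, if_neg (by omega)]
  congr 2
  simp only [neg_neg, bind_pure_comp, List.map_eq_map, List.map_map, Int.toNat_natCast]
  rfl

lemma blockStart_succ (T : A → List A) (ω : ℤ → A) (k : ℤ) :
    blockStart T ω (k + 1) = blockStart T ω k + ((T (ω k)).length : ℤ) := by
  rcases le_or_gt 0 k with hk | hk
  · obtain ⟨m, rfl⟩ : ∃ m : ℕ, k = (m : ℤ) := ⟨k.toNat, by omega⟩
    have h1 : ((m : ℤ) + 1) = ((m + 1 : ℕ) : ℤ) := by push_cast; ring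
    rw [h1, blockStart_natCast, blockStart_natCast, List.range_succ, List.map_append,
      List.sum_append]
    simp only [List.map_cons, List.map_nil, List.sum_cons, List.sum_nil]
    ring
  · obtain ⟨m, hm⟩ : ∃ m : ℕ, k + 1 = -(m : ℤ) := ⟨(-(k+1)).toNat, by omega⟩
    have hk' : k = -((m + 1 : ℕ) : ℤ) := by push_cast; omega
    have e1 : blockStart T ω (k + 1)
        = -(((List.range m).map fun i : ℕ => ((T (ω (-(i:ℤ) - 1))).length : ℤ)).sum) := by
      rw [hm, blockStart_neg]
    have e3 : ((List.range (m+1)).map fun i : ℕ => ((T (ω (-(i:ℤ) - 1))).length : ℤ)).sum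
        = ((List.range m).map fun i : ℕ => ((T (ω (-(i:ℤ) - 1))).length : ℤ)).sum
          + ((T (ω (-(m:ℤ) - 1))).length : ℤ) := by
      rw [List.range_succ, List.map_append, List.sum_append]
      simp only [List.map_cons, List.map_nil, List.sum_cons, List.sum_nil]
      ring
    have e2 : blockStart T ω k
        = -(((List.range (m+1)).map fun i : ℕ => ((T (ω (-(i:ℤ) - 1))).length : ℤ)).sum) := by
      rw [hk', blockStart_neg]
    have h2 : -((m:ℤ)) - 1 = k := by omega
    rw [h2] at e3
    rw [e1, e2, e3]
    ring

lemma blockStart_lt_succ (hT : ∀ a, T a ≠ []) (k : ℤ) :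
    blockStart T ω k < blockStart T ω (k + 1) := by
  have h1 := blockStart_succ T ω k
  have h2 : 1 ≤ ((T (ω k)).length : ℤ) := by
    have := List.length_pos_iff.2 (hT (ω k)); omega
  omega

lemma blockStart_le (hT : ∀ a, T a ≠ []) {k l : ℤ} (h : k ≤ l) :
    blockStart T ω k + (l - k) ≤ blockStart T ω l := by
  refine Int.le_induction (motive := fun l _ => blockStart T ω k + (l - k) ≤ blockStart T ω l)
    (by omega) ?_ l h
  intro m hm ih
  have h1 := blockStart_succ T ω m
  have h2 : 1 ≤ ((T (ω m)).length : ℤ) := by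
    have := List.length_pos_iff.2 (hT (ω m)); omega
  omega

lemma blockStart_mono (hT : ∀ a, T a ≠ []) {k l : ℤ} (h : k ≤ l) :
    blockStart T ω k ≤ blockStart T ω l := by
  have := blockStart_le (ω := ω) hT h; omega

lemma blockStart_le_mul (hT : ∀ a, T a ≠ []) (m : ℕ) (hm : ∀ a, m ≤ (T a).length)
    {k l : ℤ} (h : k ≤ l) :
    blockStart T ω k + (m : ℤ) * (l - k) ≤ blockStart T ω l := by
  refine Int.le_induction
    (motive := fun l _ => blockStart T ω k + (m : ℤ) * (l - k) ≤ blockStart T ω l) (by simp) ?_ l h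
  intro n hn ih
  have h1 := blockStart_succ T ω n
  have h2 : (m : ℤ) ≤ ((T (ω n)).length : ℤ) := by exact_mod_cast hm (ω n)
  have h3 : (m : ℤ) * (n + 1 - k) = m * (n - k) + m := by ring
  omega

lemma exists_block (hT : ∀ a, T a ≠ []) (n : ℤ) :
    ∃ k : ℤ, blockStart T ω k ≤ n ∧ n < blockStart T ω (k + 1) := by
  induction n using Int.induction_on with
  | zero =>
      refine ⟨0, by rw [blockStart_zero], ?_⟩
      have h1 := blockStart_lt_succ (ω := ω) hT 0
      have h2 := blockStart_zero T ω
      omega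
  | succ i ih =>
      obtain ⟨k, h1, h2⟩ := ih
      rcases lt_or_ge ((i : ℤ) + 1) (blockStart T ω (k + 1)) with h | h
      · exact ⟨k, by omega, h⟩
      · refine ⟨k + 1, by omega, ?_⟩
        have := blockStart_lt_succ (ω := ω) hT (k + 1)
        omega
  | pred i ih =>
      obtain ⟨k, h1, h2⟩ := ih
      rcases le_or_gt (blockStart T ω k) (-(i : ℤ) - 1) with h | h
      · exact ⟨k, h, by omega⟩
      · refine ⟨k - 1, ?_, ?_⟩
        · have := blockStart_lt_succ (ω := ω) hT (k - 1)
          have he : k - 1 + 1 = k := by ring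
          rw [he] at this
          omega
        · have he : k - 1 + 1 = k := by ring
          rw [he]
          omega

lemma block_unique (hT : ∀ a, T a ≠ []) {k k' n : ℤ}
    (h1 : blockStart T ω k ≤ n) (h2 : n < blockStart T ω (k + 1))
    (h3 : blockStart T ω k' ≤ n) (h4 : n < blockStart T ω (k' + 1)) : k = k' := by
  by_contra hne
  rcases lt_or_gt_of_ne hne with h | h
  · have := blockStart_mono (ω := ω) hT (by omega : k + 1 ≤ k'); omega
  · have := blockStart_mono (ω := ω) hT (by omega : k' + 1 ≤ k); omega

lemma confSub_apply (hT : ∀ a, T a ≠ []) {k n : ℤ}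
    (h1 : blockStart T ω k ≤ n) (h2 : n < blockStart T ω (k + 1)) :
    confSub T ω n = (T (ω k)).getD (n - blockStart T ω k).toNat (Classical.arbitrary A) := by
  rw [confSub]
  have hex : ∃ k : ℤ, blockStart T ω k ≤ n ∧ n < blockStart T ω (k + 1) := ⟨k, h1, h2⟩
  rw [dif_pos hex]
  obtain ⟨hc1, hc2⟩ := Classical.choose_spec hex
  rw [block_unique hT hc1 hc2 h1 h2]

lemma block_window (hT : ∀ a, T a ≠ []) (k : ℤ) :
    T (ω k) = window (confSub T ω) (blockStart T ω k) (T (ω k)).length := by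
  apply List.ext_getElem (by simp)
  intro i h1 h2
  rw [window_getElem _ _ _ _ (by simpa using h2)]
  have hs := blockStart_succ T ω k
  rw [confSub_apply hT (k := k) (by omega) (by omega)]
  have h3 : (blockStart T ω k + (i : ℤ) - blockStart T ω k).toNat = i := by omega
  rw [h3, List.getD_eq_getElem _ _ h1]

lemma wordSub_window (hT : ∀ a, T a ≠ []) (k : ℤ) (t : ℕ) :
    wordSub T (window ω k t) = window (confSub T ω) (blockStart T ω k)
      ((blockStart T ω (k + t) - blockStart T ω k).toNat) := by
  induction t with
  | zero =>
      have e0 : k + ((0:ℕ):ℤ) = k := by push_cast; ring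
      rw [e0, sub_self]
      simp
  | succ t ih =>
      have hsplit : window ω k (t + 1) = window ω k t ++ window ω (k + t) 1 := window_add ω k t 1
      rw [hsplit, window_one, wordSub_append, ih, wordSub_singleton]
      rw [block_window (ω := ω) hT (k + t)]
      have hmono := blockStart_mono (ω := ω) hT (by omega : k ≤ k + (t:ℤ))
      have hs := blockStart_succ T ω (k + t)
      have harith : ((blockStart T ω (k + (t:ℕ)) - blockStart T ω k)).toNat + (T (ω (k + t))).length
          = ((blockStart T ω (k + ((t:ℕ)+1:ℕ)) - blockStart T ω k)).toNat := by
        push_cast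
        have he : k + ((t:ℤ) + 1) = (k + t) + 1 := by ring
        rw [he]
        omega
      rw [← harith, window_add]
      congr 2
      omega

end Aux2
section Aux3
variable {A : Type*} [Nonempty A]

lemma confSub_comp (S T : A → List A) (hS : ∀ a, S a ≠ []) (hT : ∀ a, T a ≠ []) (ω : ℤ → A) :
    confSub S (confSub T ω) = confSub (fun a => wordSub S (T a)) ω := by
  set U : A → List A := fun a => wordSub S (T a) with hU
  have hU_ne : ∀ a, U a ≠ [] := fun a => wordSub_ne_nil S hS (hT a)
  set ω' : ℤ → A := confSub T ω with hω'
  have hblock : ∀ k : ℤ,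
      U (ω k) = window (confSub S ω') (blockStart S ω' (blockStart T ω k)) (U (ω k)).length ∧
      blockStart S ω' (blockStart T ω (k + 1))
        = blockStart S ω' (blockStart T ω k) + ((U (ω k)).length : ℤ) := by
    intro k
    have h1 := block_window (T := T) (ω := ω) hT k
    have h2 := wordSub_window (T := S) (ω := ω') hS (blockStart T ω k) (T (ω k)).length
    rw [← h1] at h2
    have hlen : (U (ω k)).length =
        ((blockStart S ω' (blockStart T ω k + ((T (ω k)).length : ℤ))
          - blockStart S ω' (blockStart T ω k)).toNat) := by
      rw [show U (ω k) = wordSub S (T (ω k)) from rfl, h2, window_length]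
    have hsucc := blockStart_succ T ω k
    have hmono := blockStart_mono (T := S) (ω := ω') hS
      (show blockStart T ω k ≤ blockStart T ω k + ((T (ω k)).length : ℤ) by
        have := (T (ω k)).length; omega)
    constructor
    · rw [hlen, show U (ω k) = wordSub S (T (ω k)) from rfl, h2]
    · rw [hsucc]
      omega
  have key : ∀ k : ℤ, blockStart U ω k = blockStart S ω' (blockStart T ω k) := by
    intro k
    induction k using Int.induction_on with
    | zero => rw [blockStart_zero, blockStart_zero, blockStart_zero]
    | succ i ih =>
        rw [blockStart_succ U ω i, ih, (hblock i).2]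
    | pred i ih =>
        have h1 := (hblock (-(i:ℤ) - 1)).2
        have h2 := blockStart_succ U ω (-(i:ℤ) - 1)
        have he : -(i:ℤ) - 1 + 1 = -(i:ℤ) := by ring
        rw [he] at h1 h2
        rw [ih] at h2
        omega
  funext n
  obtain ⟨k, h1, h2⟩ := exists_block (T := U) (ω := ω) hU_ne n
  have hsu := blockStart_succ U ω k
  have hwin : U (ω k) = window (confSub S ω') (blockStart U ω k) (U (ω k)).length := by
    rw [key k]; exact (hblock k).1
  have hi : (n - blockStart U ω k).toNat < (U (ω k)).length := by omega
  rw [confSub_apply hU_ne h1 h2, List.getD_eq_getElem _ _ hi]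
  rw [List.getElem_of_eq hwin hi, window_getElem _ _ _ _ hi]
  congr 1
  omega

lemma confSub_id (ω : ℤ → A) : confSub (fun a => [a]) ω = ω := by
  have hid : ∀ a : A, ([a] : List A) ≠ [] := fun a => by simp
  have hB : ∀ k : ℤ, blockStart (fun a => [a]) ω k = k := by
    intro k
    induction k using Int.induction_on with
    | zero => exact blockStart_zero _ ω
    | succ i ih =>
        rw [blockStart_succ _ ω i, ih]
        simp
    | pred i ih =>
        have h := blockStart_succ (fun a : A => [a]) ω (-(i:ℤ) - 1)
        have he : -(i:ℤ) - 1 + 1 = -(i:ℤ) := by ring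
        rw [he, ih] at h
        simp at h
        omega
  funext n
  rw [confSub_apply hid (k := n) (by rw [hB]) (by rw [hB]; omega)]
  rw [hB, sub_self]
  simp

lemma iter_eq_wordSub (S : A → List A) (n : ℕ) (u : List A) :
    (wordSub S)^[n] u = wordSub (fun a => (wordSub S)^[n] [a]) u := by
  induction u with
  | nil => simp
  | cons a u ih => rw [iter_cons, ih, wordSub_cons]

lemma iterate_confSub (S : A → List A) (hS : ∀ a, S a ≠ []) (n : ℕ) (ω : ℤ → A) :
    (confSub S)^[n] ω = confSub (fun a => (wordSub S)^[n] [a]) ω := by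
  induction n generalizing ω with
  | zero => simp [confSub_id]
  | succ n ih =>
      rw [Function.iterate_succ_apply, ih (confSub S ω),
        confSub_comp (fun a => (wordSub S)^[n] [a]) S
          (fun a => iter_ne_nil S hS n (by simp)) hS ω]
      have hfun : (fun a : A => wordSub (fun b => (wordSub S)^[n] [b]) (S a))
          = fun a : A => (wordSub S)^[n+1] [a] := by
        funext a
        calc wordSub (fun b => (wordSub S)^[n] [b]) (S a)
            = (wordSub S)^[n] (S a) := (iter_eq_wordSub S n (S a)).symm
          _ = (wordSub S)^[n] (wordSub S [a]) := by rw [wordSub_singleton]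
          _ = (wordSub S)^[n+1] [a] := (Function.iterate_succ_apply (wordSub S) n [a]).symm
      rw [hfun]

end Aux3
section Aux4
variable {A : Type*} [Nonempty A]

lemma occurs_wordSub {T : A → List A} (hT : ∀ a, T a ≠ []) {u : List A} {ω : ℤ → A}
    (h : Occurs u ω) : Occurs (wordSub T u) (confSub T ω) := by
  obtain ⟨a, hu⟩ := (occurs_iff u ω).1 h
  rw [hu, wordSub_window hT]
  exact occurs_window _ _ _

lemma occurs_iterate (S : A → List A) (hS : ∀ a, S a ≠ []) (n : ℕ) {u : List A} {ω : ℤ → A}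
    (h : Occurs u ω) : Occurs ((wordSub S)^[n] u) ((confSub S)^[n] ω) := by
  rw [iterate_confSub S hS n, iter_eq_wordSub S n]
  exact occurs_wordSub (fun a => iter_ne_nil S hS n (by simp)) h

lemma extract_block {T : A → List A} (hT : ∀ a, T a ≠ []) (msb : ℕ)
    (hmsb : ∀ a, msb ≤ (T a).length) {w : List A} {ω : ℤ → A}
    (hw : Occurs w (confSub T ω)) (h1 : 1 ≤ w.length) (h2 : w.length ≤ msb + 1) :
    ∃ u, Occurs u ω ∧ 1 ≤ u.length ∧ u.length ≤ 2 ∧ w <:+: wordSub T u := by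
  obtain ⟨j, hj⟩ := (occurs_iff w _).1 hw
  obtain ⟨k₁, hk1, hk1'⟩ := exists_block (ω := ω) hT j
  obtain ⟨k₂, hk2, hk2'⟩ := exists_block (ω := ω) hT (j + w.length - 1)
  have hk12 : k₁ ≤ k₂ := by
    by_contra hc
    push_neg at hc
    have := blockStart_mono (ω := ω) hT (show k₂ + 1 ≤ k₁ by omega)
    omega
  have hk21 : k₂ ≤ k₁ + 1 := by
    by_contra hc
    push_neg at hc
    have hmul := blockStart_le_mul (ω := ω) hT msb hmsb (show k₁ + 1 ≤ k₂ by omega)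
    have hge : (msb : ℤ) * 1 ≤ (msb : ℤ) * (k₂ - (k₁ + 1)) := by
      apply mul_le_mul_of_nonneg_left (by omega) (by positivity)
    omega
  refine ⟨window ω k₁ (k₂ - k₁ + 1).toNat, occurs_window _ _ _, by simp; omega, by simp; omega, ?_⟩
  rw [wordSub_window hT k₁ (k₂ - k₁ + 1).toNat]
  have he : (k₁ + ((k₂ - k₁ + 1).toNat : ℤ)) = k₂ + 1 := by omega
  rw [he, hj]
  have hmono := blockStart_mono (ω := ω) hT (show k₁ ≤ k₂ + 1 by omega)
  apply window_infix _ _ _ _ _ hk1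
  push_cast
  omega

lemma short_words_legal (S : A → List A) (hS : ∀ a, S a ≠ []) (ω₀ : ℤ → A)
    (hleg : ∀ u : List A, u.length = 2 → Occurs u ω₀ → Legal S u) (n : ℕ) (msb : ℕ)
    (hmsb : ∀ a, msb ≤ ((wordSub S)^[n] [a]).length) {w : List A}
    (hw : Occurs w ((confSub S)^[n] ω₀)) (h1 : 1 ≤ w.length) (h2 : w.length ≤ msb + 1) :
    Legal S w := by
  rw [iterate_confSub S hS n] at hw
  obtain ⟨u, hu, hu1, hu2, hinf⟩ :=
    extract_block (fun a => iter_ne_nil S hS n (by simp)) msb hmsb hw h1 h2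
  rw [← iter_eq_wordSub] at hinf
  have hulegal : Legal S u := by
    interval_cases hlen : u.length
    · obtain ⟨c, rfl⟩ := List.length_eq_one_iff.1 hlen
      exact legal_letter S c
    · exact hleg u hlen hu
  exact legal_infix hinf (legal_iter n hulegal)

end Aux4

section Aux5
variable {A : Type*} [Nonempty A] [Fintype A]

/-- minimal length of `Sⁿ(a)` over letters `a`. -/
noncomputable def mlen (S : A → List A) (n : ℕ) : ℕ :=
  Finset.univ.inf' Finset.univ_nonempty fun a => ((wordSub S)^[n] [a]).length

lemma mlen_le (S : A → List A) (n : ℕ) (a : A) :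
    mlen S n ≤ ((wordSub S)^[n] [a]).length :=
  Finset.inf'_le _ (Finset.mem_univ a)

lemma one_le_mlen (S : A → List A) (hS : ∀ a, S a ≠ []) (n : ℕ) : 1 ≤ mlen S n := by
  apply Finset.le_inf'
  intro a _
  exact List.length_pos_iff.2 (iter_ne_nil S hS n (by simp))

lemma length_iter_ge (S : A → List A) (n : ℕ) (u : List A) :
    mlen S n * u.length ≤ ((wordSub S)^[n] u).length := by
  induction u with
  | nil => simp
  | cons a u ih =>
      rw [iter_cons, List.length_append, List.length_cons, Nat.mul_succ]
      have := mlen_le S n a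
      omega

lemma mlen_mono (S : A → List A) (hS : ∀ a, S a ≠ []) {m n : ℕ} (h : m ≤ n) :
    mlen S m ≤ mlen S n := by
  induction n, h using Nat.le_induction with
  | base => exact le_refl _
  | succ n hn ih =>
      refine le_trans ih ?_
      apply Finset.le_inf'
      intro a _
      have h1 : (wordSub S)^[n+1] [a] = (wordSub S)^[n] (S a) := by
        rw [Function.iterate_succ_apply, wordSub_singleton]
      rw [h1]
      have h2 := length_iter_ge S n (S a)
      have h3 : 1 ≤ (S a).length := List.length_pos_iff.2 (hS a)
      have h4 : mlen S n * 1 ≤ mlen S n * (S a).length := by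
        apply Nat.mul_le_mul_left
        omega
      omega

lemma two_le_length_iter (S : A → List A) (hS : ∀ a, S a ≠ []) {p : ℕ}
    (hp : ∀ a b : A, b ∈ (wordSub S)^[p] [a]) {a₀ : A} (ha₀ : 2 ≤ (S a₀).length) (a : A) :
    2 ≤ ((wordSub S)^[p+1] [a]).length := by
  have h1 : (wordSub S)^[p+1] [a] = wordSub S ((wordSub S)^[p] [a]) :=
    Function.iterate_succ_apply' (wordSub S) p [a]
  obtain ⟨s, t, hst⟩ := List.append_of_mem (hp a a₀)
  have h2 : s ++ a₀ :: t = s ++ [a₀] ++ t := by simp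
  rw [h1, hst, h2, wordSub_append, wordSub_append, wordSub_singleton]
  simp only [List.length_append]
  omega

lemma mlen_tendsto (S : A → List A) (hS : ∀ a, S a ≠ []) {p : ℕ}
    (hp : ∀ a b : A, b ∈ (wordSub S)^[p] [a]) {a₀ : A} (ha₀ : 2 ≤ (S a₀).length) (r : ℕ) :
    ∃ N : ℕ, ∀ n, N ≤ n → r ≤ mlen S n := by
  have hstep : ∀ n : ℕ, mlen S n + 1 ≤ mlen S (n + (p + 1)) := by
    intro n
    apply Finset.le_inf'
    intro a _
    have h1 : (wordSub S)^[n + (p+1)] [a] = (wordSub S)^[n] ((wordSub S)^[p+1] [a]) :=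
      Function.iterate_add_apply (wordSub S) n (p+1) [a]
    rw [h1]
    have h2 := length_iter_ge S n ((wordSub S)^[p+1] [a])
    have h3 := two_le_length_iter S hS hp ha₀ a
    have h4 := one_le_mlen S hS n
    nlinarith
  have hgrow : ∀ k : ℕ, k + 1 ≤ mlen S (k * (p + 1)) := by
    intro k
    induction k with
    | zero => simpa using one_le_mlen S hS 0
    | succ k ih =>
        have h1 := hstep (k * (p + 1))
        have h2 : (k + 1) * (p + 1) = k * (p + 1) + (p + 1) := by ring
        rw [h2]
        omega
  refine ⟨r * (p + 1), fun n hn => ?_⟩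
  have h1 := hgrow r
  have h2 := mlen_mono S hS hn
  omega

end Aux5
section Aux6
variable {A : Type*} [Nonempty A]

/-- cumulative left offsets for the fixed-point construction -/
def starC (S : A → List A) (q : ℕ) (Lw : List A) : ℕ → ℕ
  | 0 => 0
  | k+1 => ((wordSub S)^[q*k] Lw).length + starC S q Lw k

/-- cumulative right margins -/
def starD (S : A → List A) (q : ℕ) (Rw : List A) : ℕ → ℕ
  | 0 => 0
  | k+1 => ((wordSub S)^[q*k] Rw).length + starD S q Rw k

/-- the two-sided fixed-point configuration -/
noncomputable def starConf (S : A → List A) (q : ℕ) (astar : A) (Lw : List A) : ℤ → A :=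
  fun n => ((wordSub S)^[q*(n.natAbs+1)] [astar]).getD
    (n + starC S q Lw (n.natAbs+1)).toNat (Classical.arbitrary A)

variable {S : A → List A} {q : ℕ} {astar : A} {Lw Rw : List A}

lemma Wk_decomp (hq : (wordSub S)^[q] [astar] = Lw ++ astar :: Rw) (k : ℕ) :
    (wordSub S)^[q*(k+1)] [astar]
      = (wordSub S)^[q*k] Lw ++ ((wordSub S)^[q*k] [astar] ++ (wordSub S)^[q*k] Rw) := by
  have h1 : q*(k+1) = q*k + q := by ring
  rw [h1, Function.iterate_add_apply, hq]
  have h2 : Lw ++ astar :: Rw = Lw ++ ([astar] ++ Rw) := by simp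
  rw [h2, iter_append, iter_append]

lemma len_Wk (hq : (wordSub S)^[q] [astar] = Lw ++ astar :: Rw) (k : ℕ) :
    ((wordSub S)^[q*k] [astar]).length = starC S q Lw k + 1 + starD S q Rw k := by
  induction k with
  | zero => simp [starC, starD]
  | succ k ih =>
      rw [Wk_decomp hq k]
      simp only [List.length_append, starC, starD]
      omega

lemma starC_mono (hS : ∀ a, S a ≠ []) (hL : Lw ≠ []) {k k' : ℕ} (h : k ≤ k') :
    starC S q Lw k + (k' - k) ≤ starC S q Lw k' := by
  induction k', h using Nat.le_induction with
  | base => omega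
  | succ n hn ih =>
      have h1 : 1 ≤ ((wordSub S)^[q*n] Lw).length :=
        List.length_pos_iff.2 (iter_ne_nil S hS _ hL)
      have h2 : starC S q Lw (n+1) = ((wordSub S)^[q*n] Lw).length + starC S q Lw n := rfl
      omega

lemma starD_mono (hS : ∀ a, S a ≠ []) (hR : Rw ≠ []) {k k' : ℕ} (h : k ≤ k') :
    starD S q Rw k + (k' - k) ≤ starD S q Rw k' := by
  induction k', h using Nat.le_induction with
  | base => omega
  | succ n hn ih =>
      have h1 : 1 ≤ ((wordSub S)^[q*n] Rw).length :=
        List.length_pos_iff.2 (iter_ne_nil S hS _ hR)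
      have h2 : starD S q Rw (n+1) = ((wordSub S)^[q*n] Rw).length + starD S q Rw n := rfl
      omega

lemma star_stab (hS : ∀ a, S a ≠ []) (hq : (wordSub S)^[q] [astar] = Lw ++ astar :: Rw)
    (hL : Lw ≠ []) (hR : Rw ≠ []) {k k' : ℕ} (h : k ≤ k') (i : ℕ)
    (hi : i < ((wordSub S)^[q*k] [astar]).length) (d : A) :
    ((wordSub S)^[q*k'] [astar]).getD (starC S q Lw k' - starC S q Lw k + i) d
      = ((wordSub S)^[q*k] [astar]).getD i d := by
  induction k', h using Nat.le_induction with
  | base => simp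
  | succ n hn ih =>
      have hcm := starC_mono (q := q) hS hL hn
      have hdm := starD_mono (q := q) hS hR hn
      have hlen_k := len_Wk hq k
      have hlen_n := len_Wk hq n
      have hc1 : starC S q Lw (n+1) = ((wordSub S)^[q*n] Lw).length + starC S q Lw n := rfl
      have hidx : starC S q Lw (n+1) - starC S q Lw k + i
          = ((wordSub S)^[q*n] Lw).length + (starC S q Lw n - starC S q Lw k + i) := by
        omega
      rw [Wk_decomp hq n, hidx]
      rw [List.getD_append_right _ _ _ _ (by omega)]
      have h2 : ((wordSub S)^[q*n] Lw).length + (starC S q Lw n - starC S q Lw k + i)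
          - ((wordSub S)^[q*n] Lw).length = starC S q Lw n - starC S q Lw k + i := by omega
      rw [h2]
      rw [List.getD_append _ _ _ _ (by omega)]
      exact ih

lemma star_apply (hS : ∀ a, S a ≠ []) (hq : (wordSub S)^[q] [astar] = Lw ++ astar :: Rw)
    (hL : Lw ≠ []) (hR : Rw ≠ []) (k : ℕ) (n : ℤ)
    (h1 : -(starC S q Lw k : ℤ) ≤ n)
    (h2 : n + starC S q Lw k < ((wordSub S)^[q*k] [astar]).length) :
    starConf S q astar Lw n
      = ((wordSub S)^[q*k] [astar]).getD (n + starC S q Lw k).toNat (Classical.arbitrary A) := by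
  have hKb1 : -(starC S q Lw (n.natAbs + 1) : ℤ) ≤ n := by
    have := starC_mono (q := q) hS hL (Nat.zero_le (n.natAbs + 1))
    have hc0 : starC S q Lw 0 = 0 := rfl
    omega
  have hKb2 : n + starC S q Lw (n.natAbs + 1)
      < ((wordSub S)^[q*(n.natAbs + 1)] [astar]).length := by
    have hlen := len_Wk hq (n.natAbs + 1)
    have := starD_mono (q := q) hS hR (Nat.zero_le (n.natAbs + 1))
    have hd0 : starD S q Rw 0 = 0 := rfl
    omega
  have e1 := star_stab hS hq hL hR (le_max_left k (n.natAbs + 1))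
    (n + starC S q Lw k).toNat (by omega) (Classical.arbitrary A)
  have e2 := star_stab hS hq hL hR (le_max_right k (n.natAbs + 1))
    (n + starC S q Lw (n.natAbs + 1)).toNat (by omega) (Classical.arbitrary A)
  have hles := starC_mono (q := q) hS hL (le_max_left k (n.natAbs + 1))
  have hles2 := starC_mono (q := q) hS hL (le_max_right k (n.natAbs + 1))
  have hidx : starC S q Lw (max k (n.natAbs + 1)) - starC S q Lw k + (n + starC S q Lw k).toNat
      = starC S q Lw (max k (n.natAbs + 1)) - starC S q Lw (n.natAbs + 1)
        + (n + starC S q Lw (n.natAbs + 1)).toNat := by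
    omega
  have hdef : starConf S q astar Lw n
      = ((wordSub S)^[q*(n.natAbs + 1)] [astar]).getD
          (n + starC S q Lw (n.natAbs + 1)).toNat (Classical.arbitrary A) := rfl
  rw [hdef, ← e2, ← hidx, e1]

lemma Wk_window (hS : ∀ a, S a ≠ []) (hq : (wordSub S)^[q] [astar] = Lw ++ astar :: Rw)
    (hL : Lw ≠ []) (hR : Rw ≠ []) (k : ℕ) :
    (wordSub S)^[q*k] [astar]
      = window (starConf S q astar Lw) (-(starC S q Lw k : ℤ)) ((wordSub S)^[q*k] [astar]).length := by
  apply List.ext_getElem (by simp)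
  intro i hi1 hi2
  rw [window_getElem _ _ _ _ (by simpa using hi2)]
  rw [star_apply hS hq hL hR k (-(starC S q Lw k : ℤ) + i) (by omega) (by omega)]
  have h3 : (-(starC S q Lw k : ℤ) + i + starC S q Lw k).toNat = i := by omega
  rw [h3, List.getD_eq_getElem _ _ hi1]

lemma occurs_Wk (hS : ∀ a, S a ≠ []) (hq : (wordSub S)^[q] [astar] = Lw ++ astar :: Rw)
    (hL : Lw ≠ []) (hR : Rw ≠ []) (k : ℕ) :
    Occurs ((wordSub S)^[q*k] [astar]) (starConf S q astar Lw) := by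
  rw [Wk_window hS hq hL hR k]
  exact occurs_window _ _ _

lemma star_mem_OmegaS (hS : ∀ a, S a ≠ []) (hq : (wordSub S)^[q] [astar] = Lw ++ astar :: Rw)
    (hL : Lw ≠ []) (hR : Rw ≠ []) :
    starConf S q astar Lw ∈ OmegaS S := by
  rintro u ⟨hne, hocc⟩
  obtain ⟨pos, hu⟩ := (occurs_iff u _).1 hocc
  set k : ℕ := pos.natAbs + u.length with hk
  have hck := starC_mono (q := q) hS hL (Nat.zero_le k)
  have hdk := starD_mono (q := q) hS hR (Nat.zero_le k)
  have hc0 : starC S q Lw 0 = 0 := rfl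
  have hd0 : starD S q Rw 0 = 0 := rfl
  have hlenk := len_Wk hq k
  have hul : 1 ≤ u.length := List.length_pos_iff.2 hne
  set m : ℕ := (pos + starC S q Lw k).toNat with hm
  have hmn : m + u.length ≤ ((wordSub S)^[q*k] [astar]).length := by omega
  have hval : ∀ i : ℕ, i < u.length →
      starConf S q astar Lw (pos + i)
        = ((wordSub S)^[q*k] [astar]).getD (m + i) (Classical.arbitrary A) := by
    intro i hilt
    rw [star_apply hS hq hL hR k (pos + i) (by omega) (by omega)]
    congr 1
    omega
  have huget : u = (((wordSub S)^[q*k] [astar]).drop m).take u.length := by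
    apply List.ext_getElem
    · rw [List.length_take, List.length_drop]
      omega
    · intro i hi1 hi2
      rw [List.getElem_take, List.getElem_drop]
      rw [List.getElem_of_eq hu hi1]
      rw [window_getElem _ _ _ _ hi1, hval i hi1]
      rw [List.getD_eq_getElem _ _ (by omega)]
  have hinf : u <:+: (wordSub S)^[q*k] [astar] := by
    rw [huget]
    exact (List.take_prefix _ _).isInfix.trans (List.drop_suffix _ _).isInfix
  exact ⟨astar, q*k, hinf⟩

end Aux6
section Aux7
variable {A : Type*} [Nonempty A] [Fintype A]

lemma legal_occurs_star {S : A → List A} {q : ℕ} {astar : A} {Lw Rw : List A}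
    (hS : ∀ a, S a ≠ []) (hq : (wordSub S)^[q] [astar] = Lw ++ astar :: Rw)
    (hL : Lw ≠ []) (hR : Rw ≠ []) (hq1 : 1 ≤ q) {p : ℕ}
    (hp : ∀ a b : A, b ∈ (wordSub S)^[p] [a]) {w : List A} (hw : Legal S w) :
    Occurs w (starConf S q astar Lw) := by
  obtain ⟨m, hm⟩ := legal_infix_iter hS hp hw
  have hmq : m ≤ q * m + m := by omega
  exact occurs_of_infix (hm (q * (m + 1)) (by nlinarith) astar) (occurs_Wk hS hq hL hR (m + 1))

lemma exists_seed (S : A → List A) (hS : ∀ a, S a ≠ []) {p : ℕ}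
    (hp : ∀ a b : A, b ∈ (wordSub S)^[p] [a]) {a₀ : A} (ha₀ : 2 ≤ (S a₀).length) :
    ∃ (q : ℕ) (astar : A) (Lw Rw : List A), 1 ≤ q ∧
      (wordSub S)^[q] [astar] = Lw ++ astar :: Rw ∧ Lw ≠ [] ∧ Rw ≠ [] := by
  set astar := a₀ with hastar
  have hv2 : ∀ b : A, 2 ≤ ((wordSub S)^[p+1] [b]).length :=
    two_le_length_iter S hS hp ha₀
  -- the word W^[2(p+1)] astar has length ≥ 3
  have hw3 : 3 ≤ ((wordSub S)^[(p+1) + (p+1)] [astar]).length := by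
    rw [Function.iterate_add_apply]
    rcases hvv : (wordSub S)^[p+1] [astar] with _ | ⟨d₁, _ | ⟨d₂, v'⟩⟩
    · have := hv2 astar; rw [hvv] at this; simp at this
    · have := hv2 astar; rw [hvv] at this; simp at this
    · rw [iter_cons S (p+1) d₁ (d₂ :: v'), iter_cons S (p+1) d₂ v',
        List.length_append, List.length_append]
      have h1 := hv2 d₁
      have h2 := hv2 d₂
      omega
  rcases hww : (wordSub S)^[(p+1) + (p+1)] [astar] with _ | ⟨c₁, _ | ⟨c₂, w₂⟩⟩
  · rw [hww] at hw3; simp at hw3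
  · rw [hww] at hw3; simp at hw3
  · have hw₂ : w₂ ≠ [] := by
      rw [hww] at hw3
      simp at hw3
      intro hc
      rw [hc] at hw3
      simp at hw3
    obtain ⟨s, t, hst⟩ := List.append_of_mem (hp c₂ astar)
    refine ⟨p + ((p+1) + (p+1)), astar, (wordSub S)^[p] [c₁] ++ s, t ++ (wordSub S)^[p] w₂,
      by omega, ?_, ?_, ?_⟩
    · rw [Function.iterate_add_apply, hww, iter_cons S p c₁ (c₂ :: w₂), iter_cons S p c₂ w₂, hst]
      simp [List.append_assoc]
    · intro hcon
      exact (iter_ne_nil S hS p (by simp : ([c₁] : List A) ≠ []))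
        (List.append_eq_nil_iff.1 hcon).1
    · intro hcon
      exact (iter_ne_nil S hS p hw₂) (List.append_eq_nil_iff.1 hcon).2

end Aux7
section Aux8
variable {A : Type*}

lemma shift_mem_OmegaS {S : A → List A} {ω : ℤ → A} (h : ω ∈ OmegaS S) (m : ℤ) :
    shift m ω ∈ OmegaS S := by
  rintro u ⟨hne, hocc⟩
  exact h u ⟨hne, occurs_shift hocc⟩

lemma hull_window {σ η : ℤ → A} (h : η ∈ hull σ) (r : ℕ) :
    ∃ m : ℤ, ∀ k : ℤ, |k| ≤ (r : ℤ) → η k = shift m σ k := by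
  classical
  letI instA : TopologicalSpace A := ⊥
  haveI : DiscreteTopology A := ⟨rfl⟩
  letI instC : TopologicalSpace (ℤ → A) := confTop A
  have hC : instC = Pi.topologicalSpace := rfl
  set U : Set (ℤ → A) := ⋂ k ∈ Finset.Icc (-(r:ℤ)) (r:ℤ), (fun η' : ℤ → A => η' k) ⁻¹' {η k}
    with hU
  have hopen : IsOpen U := by
    apply isOpen_biInter_finset
    intro k _
    exact (continuous_apply k).isOpen_preimage _ (isOpen_discrete _)
  have hmem : η ∈ U := by
    simp [hU]
  have hclos : η ∈ closure (orbit σ) := h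
  obtain ⟨η', hη'U, hη'orb⟩ := _root_.mem_closure_iff.1 hclos U hopen hmem
  obtain ⟨m, rfl⟩ := hη'orb
  refine ⟨m, fun k hk => ?_⟩
  have h1 : shift m σ ∈ U := hη'U
  rw [hU] at h1
  have hk2 := abs_le.mp hk
  have h2 := Set.mem_iInter₂.1 h1 k (Finset.mem_Icc.mpr ⟨by omega, by omega⟩)
  rw [Set.mem_preimage, Set.mem_singleton_iff] at h2
  exact h2.symm

lemma confDist_nonneg (ω₁ ω₂ : ℤ → A) : 0 ≤ confDist ω₁ ω₂ := by
  apply Real.sInf_nonneg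
  rintro x ⟨r, hx, -⟩
  rw [hx]
  positivity

lemma confDist_le {ω₁ ω₂ : ℤ → A} {r : ℕ} (h : ∀ k : ℤ, |k| < (r : ℤ) → ω₁ k = ω₂ k) :
    confDist ω₁ ω₂ ≤ 1 / (r + 1) := by
  apply csInf_le
  · refine ⟨0, ?_⟩
    rintro x ⟨r', hx, -⟩
    rw [hx]
    positivity
  · exact ⟨r, rfl, h⟩

lemma distToSet_nonneg (ω : ℤ → A) (Ω : Set (ℤ → A)) : 0 ≤ distToSet ω Ω := by
  apply Real.sInf_nonneg
  rintro x ⟨η, -, rfl⟩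
  exact confDist_nonneg _ _

lemma distToSet_le {ω η : ℤ → A} {Ω : Set (ℤ → A)} {c : ℝ} (hη : η ∈ Ω)
    (h : confDist ω η ≤ c) : distToSet ω Ω ≤ c := by
  refine le_trans (csInf_le ⟨0, ?_⟩ ⟨η, hη, rfl⟩) h
  rintro x ⟨η', -, rfl⟩
  exact confDist_nonneg _ _

lemma hausDist_nonneg (Ω₁ Ω₂ : Set (ℤ → A)) : 0 ≤ hausDist Ω₁ Ω₂ := by
  refine le_trans ?_ (le_max_left _ _)
  apply Real.sSup_nonneg
  rintro x ⟨ω, -, rfl⟩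
  exact distToSet_nonneg _ _

lemma hausDist_le {Ω₁ Ω₂ : Set (ℤ → A)} {c : ℝ} (hc : 0 ≤ c)
    (h1 : ∀ ω ∈ Ω₁, distToSet ω Ω₂ ≤ c) (h2 : ∀ ω ∈ Ω₂, distToSet ω Ω₁ ≤ c) :
    hausDist Ω₁ Ω₂ ≤ c := by
  apply max_le
  · apply Real.sSup_le _ hc
    rintro x ⟨ω, hω, rfl⟩
    exact h1 ω hω
  · apply Real.sSup_le _ hc
    rintro x ⟨ω, hω, rfl⟩
    exact h2 ω hω

end Aux8
section Aux9
variable {A : Type*}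

lemma shift_mem_hull (σ : ℤ → A) (m : ℤ) : shift m σ ∈ hull σ := by
  letI : TopologicalSpace (ℤ → A) := confTop A
  exact subset_closure ⟨m, rfl⟩

lemma window_congr {ω₁ ω₂ : ℤ → A} {a : ℤ} {L : ℕ}
    (h : ∀ k : ℤ, a ≤ k → k < a + L → ω₁ k = ω₂ k) : window ω₁ a L = window ω₂ a L := by
  apply List.ext_getElem (by simp)
  intro i h1 h2
  rw [window_getElem _ _ _ _ (by simpa using h1), window_getElem _ _ _ _ (by simpa using h1)]
  apply h
  · omega
  · have : (i : ℤ) < L := by exact_mod_cast (by simpa using h1 : i < L)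
    omega

lemma window_eq_window_eval {ω₁ ω₂ : ℤ → A} {a b : ℤ} {L : ℕ}
    (h : window ω₁ a L = window ω₂ b L) (i : ℕ) (hi : i < L) :
    ω₁ (a + i) = ω₂ (b + i) := by
  have h1 := List.getElem_of_eq h (by simpa using hi : i < (window ω₁ a L).length)
  rw [window_getElem _ _ _ _ hi] at h1
  rw [h1, window_getElem _ _ _ _ hi]

lemma agree_of_windows {η τ : ℤ → A} {j : ℤ} {r : ℕ}
    (h1 : window η (-(r:ℤ)) (2*r+1) = window τ j (2*r+1)) (k : ℤ) (hk : |k| < (r:ℤ)) :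
    η k = shift (-(r:ℤ) - j) τ k := by
  have hk2 := abs_lt.mp hk
  have hi : ((k + r).toNat) < 2*r+1 := by omega
  have h2 := window_eq_window_eval h1 (k + r).toNat hi
  have e1 : -(r:ℤ) + ((k + r).toNat : ℤ) = k := by omega
  rw [e1] at h2
  rw [h2]
  show τ (j + ((k + r).toNat : ℤ)) = τ (k - (-(r:ℤ) - j))
  congr 1
  omega

end Aux9
/-- if all `2`-words of `ω₀` are legal, the iterated hulls converge to the
substitution subshift. -/
theorem stmt15 {A : Type*} [Fintype A] [Nonempty A] (S : A → List A) (hS : ∀ a, S a ≠ [])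
    (hprim : Primitive S) (hexp : ∃ a, 2 ≤ (S a).length) (ω₀ : ℤ → A)
    (hleg : ∀ u : List A, u.length = 2 → Occurs u ω₀ → Legal S u) :
    Filter.Tendsto (fun n : ℕ => hausDist (IHS S ω₀ n) (OmegaS S))
      Filter.atTop (nhds 0) := by
  classical
  obtain ⟨p, hp1, hp⟩ := hprim
  obtain ⟨a₀, ha₀⟩ := hexp
  obtain ⟨q, astar, Lw, Rw, hq1, hq, hLne, hRne⟩ := exists_seed S hS hp ha₀
  have hstar : starConf S q astar Lw ∈ OmegaS S := star_mem_OmegaS hS hq hLne hRne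
  have hchoice : ∀ w : List A, ∃ mw : ℕ, Legal S w →
      ∀ n, mw ≤ n → ∀ a : A, w <:+: (wordSub S)^[n] [a] := by
    intro w
    by_cases hw : Legal S w
    · obtain ⟨m, hm⟩ := legal_infix_iter hS hp hw
      exact ⟨m, fun _ => hm⟩
    · exact ⟨0, fun hc => absurd hc hw⟩
  choose g hg using hchoice
  rw [Metric.tendsto_atTop]
  intro ε hε
  obtain ⟨r, hr⟩ := exists_nat_one_div_lt hε
  obtain ⟨N₁, hN₁⟩ := mlen_tendsto S hS hp ha₀ (2*r+1)
  set F : Finset (List A) := (Finset.univ : Finset (Fin (2*r+1) → A)).image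
    (fun f => List.ofFn f) with hF
  have hmemF : ∀ w : List A, w.length = 2*r+1 → w ∈ F := by
    intro w hwl
    apply Finset.mem_image.2
    refine ⟨fun i => w[(i : ℕ)]'(by omega), Finset.mem_univ _, ?_⟩
    apply List.ext_getElem (by simp [hwl])
    intro i h1 h2
    rw [List.getElem_ofFn]
  set N₂ : ℕ := F.sup g with hN₂def
  refine ⟨max N₁ N₂, fun n hn => ?_⟩
  have hn1 : N₁ ≤ n := le_trans (le_max_left _ _) hn
  have hn2 : N₂ ≤ n := le_trans (le_max_right _ _) hn
  have hmlen : 2*r+1 ≤ mlen S n := hN₁ n hn1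
  have hdist : hausDist (IHS S ω₀ n) (OmegaS S) ≤ 1/(r+1) := by
    apply hausDist_le (by positivity)
    · -- direction (a): points of the iterated hull are close to Ω(S)
      intro η hη
      obtain ⟨m, hm⟩ := hull_window hη r
      have hwlen : (window η (-(r:ℤ)) (2*r+1)).length = 2*r+1 := window_length _ _ _
      have hwocc : Occurs (window η (-(r:ℤ)) (2*r+1)) ((confSub S)^[n] ω₀) := by
        have heq : window η (-(r:ℤ)) (2*r+1)
            = window ((confSub S)^[n] ω₀) (-(r:ℤ) - m) (2*r+1) := by
          rw [← window_shift]
          apply window_congr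
          intro k hk1 hk2
          apply hm
          have hcast : ((2*r+1 : ℕ) : ℤ) = 2*(r:ℤ)+1 := by push_cast; ring
          rw [hcast] at hk2
          rw [abs_le]
          constructor <;> omega
        rw [heq]
        exact occurs_window _ _ _
      have hlegal : Legal S (window η (-(r:ℤ)) (2*r+1)) :=
        short_words_legal S hS ω₀ hleg n (mlen S n) (mlen_le S n) hwocc
          (by omega) (by omega)
      have hoccstar := legal_occurs_star hS hq hLne hRne hq1 hp hlegal
      obtain ⟨j, hj⟩ := (occurs_iff _ _).1 hoccstar
      rw [hwlen] at hj
      refine distToSet_le (shift_mem_OmegaS hstar (-(r:ℤ) - j)) (confDist_le ?_)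
      exact agree_of_windows hj
    · -- direction (b): points of Ω(S) are close to the iterated hull
      intro ω hω
      have hwlen : (window ω (-(r:ℤ)) (2*r+1)).length = 2*r+1 := window_length _ _ _
      have hne : window ω (-(r:ℤ)) (2*r+1) ≠ [] := by
        intro hc
        rw [hc] at hwlen
        simp at hwlen
      have hlegal : Legal S (window ω (-(r:ℤ)) (2*r+1)) :=
        hω _ ⟨hne, occurs_window _ _ _⟩
      have hinf : window ω (-(r:ℤ)) (2*r+1) <:+: (wordSub S)^[n] [ω₀ 0] :=
        hg _ hlegal n (le_trans (Finset.le_sup (hmemF _ hwlen)) hn2) (ω₀ 0)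
      have hocc0 : Occurs ((wordSub S)^[n] [ω₀ 0]) ((confSub S)^[n] ω₀) := by
        apply occurs_iterate S hS n
        refine (occurs_iff _ _).2 ⟨0, ?_⟩
        rw [List.length_singleton, window_one]
      have hocc : Occurs (window ω (-(r:ℤ)) (2*r+1)) ((confSub S)^[n] ω₀) :=
        occurs_of_infix hinf hocc0
      obtain ⟨j, hj⟩ := (occurs_iff _ _).1 hocc
      rw [hwlen] at hj
      refine distToSet_le (ω := ω) (η := shift (-(r:ℤ) - j) ((confSub S)^[n] ω₀))
        (shift_mem_hull _ _) (confDist_le ?_)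
      exact agree_of_windows hj
  rw [Real.dist_eq, sub_zero, abs_of_nonneg (hausDist_nonneg _ _)]
  exact lt_of_le_of_lt hdist hr

end QC
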